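/- arXiv:1401.2260 — 2 statements merged into one kernel-verified Lean document; each statement's English description precedes it below -/
import Mathlib

section
/- Let G be a connected graph with minimum degree δ. If G contains two adjacent vertices both of degree δ, then for every k with 3 ≤ k ≤ |V(G)|, the generalized k-edge-connectivity satisfies λ_k(G) ≤ δ − 1. -/
open Classical

variable {V W : Type*}

/-- An `S`-Steiner tree: a subgraph of `G` that is a tree and contains `S`. -/
def IsSteinerTree (G : SimpleGraph V) (S : Set V) (T : G.Subgraph) : Prop :=
  S ⊆ T.verts ∧ T.coe.IsTree

/-- There exist `n` pairwise edge-disjoint `S`-Steiner trees in `G`. -/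
def HasSteinerPacking (G : SimpleGraph V) (S : Set V) (n : ℕ) : Prop :=
  ∃ T : Fin n → G.Subgraph, (∀ i, IsSteinerTree G S (T i)) ∧
    ∀ i j, i ≠ j → (T i).edgeSet ∩ (T j).edgeSet = ∅

/-- `λ(S)`: maximum number of pairwise edge-disjoint `S`-Steiner trees. -/
noncomputable def steinerNum (G : SimpleGraph V) (S : Set V) : ℕ :=
  sSup {n | HasSteinerPacking G S n}

/-- Generalized `k`-edge-connectivity `λ_k(G)`. -/
noncomputable def genEdgeConn (G : SimpleGraph V) (k : ℕ) : ℕ :=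
  sInf {m | ∃ S : Set V, S.Finite ∧ S.ncard = k ∧ steinerNum G S = m}

/-- Edge-connectivity: minimum number of edges whose deletion disconnects `G`. -/
noncomputable def edgeConn (G : SimpleGraph V) : ℕ :=
  sInf {m | ∃ F : Set (Sym2 V), F ⊆ G.edgeSet ∧ F.ncard = m ∧ ¬ (G.deleteEdges F).Connected}

/-- Degree of a vertex as the cardinality of its neighbor set. -/
noncomputable def degOf (G : SimpleGraph V) (v : V) : ℕ :=
  (G.neighborSet v).ncard

/-- Minimum degree. -/
noncomputable def minDeg (G : SimpleGraph V) : ℕ :=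
  sInf {d | ∃ v, degOf G v = d}

/-- The lexicographic product `G ∘ H`. -/
def lexProd (G : SimpleGraph V) (H : SimpleGraph W) : SimpleGraph (V × W) where
  Adj p q := G.Adj p.1 q.1 ∨ (p.1 = q.1 ∧ H.Adj p.2 q.2)
  symm := ⟨by
    rintro p q (h | ⟨h1, h2⟩)
    · exact Or.inl h.symm
    · exact Or.inr ⟨h1.symm, h2.symm⟩⟩
  loopless := ⟨by
    rintro p (h | ⟨_, h⟩)
    · exact G.irrefl h
    · exact H.irrefl h⟩


lemma exists_adj_aux {α : Type*} (H : SimpleGraph α) (h : H.Connected) (a b : α) (hab : a ≠ b) :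
    ∃ c, H.Adj a c := by
  obtain ⟨w⟩ := h.preconnected a b
  cases w with
  | nil => exact absurd rfl hab
  | cons h q => exact ⟨_, h⟩

lemma two_edges_aux {V : Type*} (G : SimpleGraph V) (T : G.Subgraph) (hT : T.coe.Connected)
    (x y z : V) (hx : x ∈ T.verts) (hy : y ∈ T.verts) (hz : z ∈ T.verts)
    (hxy : x ≠ y) (hzx : z ≠ x) (hzy : z ≠ y) :
    ∃ e1 e2 : Sym2 V, e1 ∈ T.edgeSet ∧ e2 ∈ T.edgeSet ∧ e1 ≠ e2 ∧
      (x ∈ e1 ∨ y ∈ e1) ∧ (x ∈ e2 ∨ y ∈ e2) := by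
  have hXZ : (⟨x, hx⟩ : T.verts) ≠ ⟨z, hz⟩ := by simp [Subtype.ext_iff]; exact hzx.symm
  obtain ⟨w⟩ := hT.preconnected ⟨x, hx⟩ ⟨z, hz⟩
  obtain ⟨pw, hpath⟩ := w.toPath
  cases pw with
  | nil => exact absurd rfl hXZ
  | @cons _ B _ hB q =>
      by_cases hBy : (B : V) = y
      · cases q with
        | nil =>
            exact absurd (show z = y by rw [← hBy]) hzy
        | @cons _ C _ hC q' =>
            refine ⟨s(x, y), s(y, (C : V)), ?_, ?_, ?_, ?_, ?_⟩
            · exact SimpleGraph.Subgraph.mem_edgeSet.2 (hBy ▸ hB)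
            · exact SimpleGraph.Subgraph.mem_edgeSet.2 (hBy ▸ hC)
            · have hxC : x ≠ (C : V) := by
                have hnd := hpath.support_nodup
                rw [SimpleGraph.Walk.support_cons, SimpleGraph.Walk.support_cons] at hnd
                have hXnot := (List.nodup_cons.1 hnd).1
                intro hEq
                apply hXnot
                right
                have hXC : (⟨x, hx⟩ : T.verts) = C := Subtype.ext hEq
                rw [hXC]
                exact q'.start_mem_support
              intro hEq
              rw [Sym2.eq_iff] at hEq
              rcases hEq with ⟨h1, h2⟩ | ⟨h1, h2⟩
              · exact hxy h1
              · exact hxC h1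
            · exact Or.inl (Sym2.mem_mk_left _ _)
            · exact Or.inr (Sym2.mem_mk_left _ _)
      · obtain ⟨c, hc⟩ := exists_adj_aux T.coe hT ⟨y, hy⟩ ⟨x, hx⟩
          (by simp [Subtype.ext_iff]; exact hxy.symm)
        refine ⟨s(x, (B : V)), s(y, (c : V)), ?_, ?_, ?_, ?_, ?_⟩
        · exact SimpleGraph.Subgraph.mem_edgeSet.2 hB
        · exact SimpleGraph.Subgraph.mem_edgeSet.2 hc
        · intro hEq
          have : y ∈ s(x, (B:V)) := hEq ▸ Sym2.mem_mk_left _ _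
          rcases Sym2.mem_iff.1 this with h | h
          · exact hxy h.symm
          · exact hBy h.symm
        · exact Or.inl (Sym2.mem_mk_left _ _)
        · exact Or.inr (Sym2.mem_mk_left _ _)

lemma degOf_eq_degree {V : Type*} [Fintype V] (G : SimpleGraph V) (x : V) :
    degOf G x = G.degree x := by
  classical
  rw [degOf, Set.ncard_eq_toFinset_card', Set.toFinset_card]
  exact G.card_neighborSet_eq_degree x

lemma ncard_incidenceSet {V : Type*} [Fintype V] (G : SimpleGraph V) (x : V) :
    (G.incidenceSet x).ncard = G.degree x := by
  classical
  rw [Set.ncard_eq_toFinset_card', Set.toFinset_card]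
  exact G.card_incidenceSet_eq_degree x


theorem stmt2 {V : Type*} [Fintype V] (G : SimpleGraph V) (hG : G.Connected)
    (x y : V) (hxy : G.Adj x y) (hx : degOf G x = minDeg G) (hy : degOf G y = minDeg G)
    (k : ℕ) (hk3 : 3 ≤ k) (hkn : k ≤ Fintype.card V) :
    genEdgeConn G k ≤ minDeg G - 1 := by
  classical
  set d := minDeg G with hd
  have hxyne : x ≠ y := hxy.ne
  -- choose the set S
  have hcard2 : ({x, y} : Finset V).card ≤ k := by
    calc ({x, y} : Finset V).card ≤ 2 := Finset.card_insert_le _ _ |>.trans (by simp)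
    _ ≤ k := by omega
  obtain ⟨t, hsub, hcard⟩ := Finset.exists_superset_card_eq hcard2 hkn
  have hxS : x ∈ t := hsub (by simp)
  have hyS : y ∈ t := hsub (by simp)
  obtain ⟨z, hzt⟩ : (t \ ({x, y} : Finset V)).Nonempty := by
    rw [← Finset.card_pos]
    have h1 := Finset.le_card_sdiff ({x, y} : Finset V) t
    have h2 : ({x, y} : Finset V).card ≤ 2 := Finset.card_insert_le _ _ |>.trans (by simp)
    omega
  rw [Finset.mem_sdiff, Finset.mem_insert, Finset.mem_singleton] at hzt
  obtain ⟨hzt, hzxy⟩ := hzt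
  push_neg at hzxy
  obtain ⟨hzx, hzy⟩ := hzxy
  set S : Set V := (t : Set V) with hS
  -- the incident-edge set
  set E : Set (Sym2 V) := G.incidenceSet x ∪ G.incidenceSet y with hE
  have hEfin : E.Finite := Set.toFinite _
  have hEcard : E.ncard ≤ 2 * d - 1 ∧ 1 ≤ d := by
    have hinter : 1 ≤ (G.incidenceSet x ∩ G.incidenceSet y).ncard := by
      have hmem : s(x, y) ∈ G.incidenceSet x ∩ G.incidenceSet y :=
        ⟨⟨G.mem_edgeSet.2 hxy, Sym2.mem_mk_left _ _⟩,
         ⟨G.mem_edgeSet.2 hxy, Sym2.mem_mk_right _ _⟩⟩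
      exact Set.ncard_pos (Set.toFinite _) |>.2 ⟨_, hmem⟩
    have hu := Set.ncard_union_add_ncard_inter (G.incidenceSet x) (G.incidenceSet y)
      (Set.toFinite _) (Set.toFinite _)
    have hix : (G.incidenceSet x).ncard = d := by
      rw [ncard_incidenceSet, ← degOf_eq_degree, hx]
    have hiy : (G.incidenceSet y).ncard = d := by
      rw [ncard_incidenceSet, ← degOf_eq_degree, hy]
    have hdpos : 1 ≤ d := by
      have : y ∈ G.neighborSet x := hxy
      have : 0 < degOf G x :=
        Set.ncard_pos (Set.toFinite _) |>.2 ⟨y, this⟩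
      omega
    constructor
    · rw [hix, hiy] at hu
      rw [hE]
      omega
    · exact hdpos
  -- bound every packing
  have hbound : ∀ n ∈ {n | HasSteinerPacking G S n}, n ≤ d - 1 := by
    rintro n ⟨T, hTtree, hTdisj⟩
    have hchoice : ∀ i : Fin n, ∃ e1 e2 : Sym2 V,
        e1 ∈ (T i).edgeSet ∧ e2 ∈ (T i).edgeSet ∧ e1 ≠ e2 ∧
        (x ∈ e1 ∨ y ∈ e1) ∧ (x ∈ e2 ∨ y ∈ e2) := by
      intro i
      obtain ⟨hSv, htree⟩ := hTtree i
      exact two_edges_aux G (T i) htree.isConnected x y z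
        (hSv hxS) (hSv hyS) (hSv hzt) hxyne hzx hzy
    choose e1 e2 he1 he2 hne hinc1 hinc2 using hchoice
    set f : Fin n → Finset (Sym2 V) := fun i => {e1 i, e2 i} with hf
    have hfcard : ∀ i, (f i).card = 2 := by
      intro i
      rw [hf]
      exact Finset.card_pair (hne i)
    have hfsub : ∀ i, f i ⊆ hEfin.toFinset := by
      intro i e he
      rw [Set.Finite.mem_toFinset]
      rw [hf] at he
      simp only [Finset.mem_insert, Finset.mem_singleton] at he
      have hmemT : e ∈ (T i).edgeSet ∧ (x ∈ e ∨ y ∈ e) := by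
        rcases he with rfl | rfl
        · exact ⟨he1 i, hinc1 i⟩
        · exact ⟨he2 i, hinc2 i⟩
      have heG : e ∈ G.edgeSet := (T i).edgeSet_subset hmemT.1
      rcases hmemT.2 with h | h
      · exact Or.inl ⟨heG, h⟩
      · exact Or.inr ⟨heG, h⟩
    have hfdisj : ∀ i ∈ (Finset.univ : Finset (Fin n)), ∀ j ∈ (Finset.univ : Finset (Fin n)),
        i ≠ j → Disjoint (f i) (f j) := by
      intro i _ j _ hij
      rw [Finset.disjoint_left]
      intro e hei hej
      have h1 : e ∈ (T i).edgeSet := by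
        rw [hf] at hei
        simp only [Finset.mem_insert, Finset.mem_singleton] at hei
        rcases hei with rfl | rfl
        · exact he1 i
        · exact he2 i
      have h2 : e ∈ (T j).edgeSet := by
        rw [hf] at hej
        simp only [Finset.mem_insert, Finset.mem_singleton] at hej
        rcases hej with rfl | rfl
        · exact he1 j
        · exact he2 j
      have := hTdisj i j hij
      have : e ∈ (T i).edgeSet ∩ (T j).edgeSet := ⟨h1, h2⟩
      rw [hTdisj i j hij] at this
      exact this
    have hsum : 2 * n ≤ E.ncard := by
      have h1 : (Finset.univ.biUnion f).card = ∑ i, (f i).card :=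
        Finset.card_biUnion hfdisj
      have h2 : ∑ i, (f i).card = 2 * n := by
        simp [hfcard, Finset.sum_const, mul_comm]
      have h3 : Finset.univ.biUnion f ⊆ hEfin.toFinset := by
        intro e he
        rw [Finset.mem_biUnion] at he
        obtain ⟨i, _, hei⟩ := he
        exact hfsub i hei
      have h4 := Finset.card_le_card h3
      rw [Set.ncard_eq_toFinset_card E hEfin]
      omega
    omega
  -- conclude
  have hzero : 0 ∈ {n | HasSteinerPacking G S n} :=
    ⟨Fin.elim0, fun i => i.elim0, fun i => i.elim0⟩
  have hsup : steinerNum G S ≤ d - 1 := csSup_le ⟨0, hzero⟩ hbound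
  have hmem : steinerNum G S ∈
      {m | ∃ S' : Set V, S'.Finite ∧ S'.ncard = k ∧ steinerNum G S' = m} :=
    ⟨S, t.finite_toSet, by rw [hS, Set.ncard_coe_finset, hcard], rfl⟩
  exact le_trans (Nat.sInf_le hmem) hsup
end

section
/- Let G be a connected graph with λ_3(G) = k and let x, y be adjacent vertices of G. Then deg_G(x) ≥ k + 1 or deg_G(y) ≥ k + 1. -/
open Classical

variable {V W : Type*}

lemma exists_nbr (G : SimpleGraph V) (T : G.Subgraph) (hT : T.coe.IsTree) {x y : V}
    (hx : x ∈ T.verts) (hy : y ∈ T.verts) (hne : x ≠ y) : ∃ w, T.Adj x w := by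
  obtain ⟨p⟩ := hT.isConnected.preconnected ⟨x, hx⟩ ⟨y, hy⟩
  cases p with
  | nil => exact absurd rfl hne
  | cons h q => exact ⟨_, (SimpleGraph.Subgraph.coe_adj _ _ _).mp h⟩

lemma tree_third (G : SimpleGraph V) (T : G.Subgraph) (hT : T.coe.IsTree) {x y z : V}
    (hx : x ∈ T.verts) (hz : z ∈ T.verts)
    (hzx : z ≠ x) (hzy : z ≠ y)
    (hax : ∀ w, T.Adj x w → w = y) (hay : ∀ w, T.Adj y w → w = x) : False := by
  obtain ⟨w⟩ := hT.isConnected.preconnected ⟨x, hx⟩ ⟨z, hz⟩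
  obtain ⟨p, hp⟩ := w.toPath
  cases p with
  | nil => exact hzx rfl
  | cons h q =>
    rename_i b
    have hb : (b : V) = y := hax _ ((SimpleGraph.Subgraph.coe_adj _ _ _).mp h)
    cases q with
    | nil => exact hzy hb
    | cons h2 r =>
      rename_i c
      have hc : (c : V) = x := by
        apply hay
        have := (SimpleGraph.Subgraph.coe_adj _ _ _).mp h2
        rwa [hb] at this
      have hcx : c = (⟨x, hx⟩ : T.verts) := Subtype.ext hc
      have hmem : (⟨x, hx⟩ : T.verts) ∈ r.support := hcx ▸ r.start_mem_support
      have hnd := hp.support_nodup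
      simp [SimpleGraph.Walk.support_cons] at hnd
      exact hnd.1.2 hmem

lemma count_nbrs [Fintype V] (G : SimpleGraph V) (k : ℕ) (x y : V) (hxy : G.Adj x y)
    (n : Fin k → V) (hadj : ∀ i, G.Adj x (n i)) (hny : ∀ i, n i ≠ y)
    (hinj : Function.Injective n) : k + 1 ≤ degOf G x := by
  have hsub : insert y (Set.range n) ⊆ G.neighborSet x := by
    rintro v (rfl | ⟨i, rfl⟩)
    · exact hxy
    · exact hadj i
  have hr : (Set.range n).ncard = k := by
    rw [Set.ncard_eq_toFinset_card' , Set.toFinset_range,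
      Finset.card_image_of_injective _ hinj, Finset.card_univ, Fintype.card_fin]
  have hcard : (insert y (Set.range n)).ncard = k + 1 := by
    rw [Set.ncard_insert_of_notMem (by rintro ⟨i, rfl⟩; exact hny i rfl) (Set.toFinite _), hr]
  calc k + 1 = (insert y (Set.range n)).ncard := hcard.symm
    _ ≤ (G.neighborSet x).ncard := Set.ncard_le_ncard hsub (Set.toFinite _)

lemma inj_of_disj (G : SimpleGraph V) {k : ℕ} (x : V)
    (T : Fin k → G.Subgraph)
    (hdisj : ∀ i j, i ≠ j → (T i).edgeSet ∩ (T j).edgeSet = ∅)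
    (n : Fin k → V) (hadj : ∀ i, (T i).Adj x (n i)) : Function.Injective n := by
  intro i j hij
  by_contra hne
  have h1 : s(x, n i) ∈ (T i).edgeSet := SimpleGraph.Subgraph.mem_edgeSet.mpr (hadj i)
  have h2 : s(x, n i) ∈ (T j).edgeSet := by
    rw [hij]; exact SimpleGraph.Subgraph.mem_edgeSet.mpr (hadj j)
  have := hdisj i j hne
  exact absurd (Set.mem_inter h1 h2) (by rw [this]; exact Set.notMem_empty _)

lemma count_from_trees [Fintype V] (G : SimpleGraph V) {k : ℕ} (x y : V) (hxy : G.Adj x y)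
    (T : Fin k → G.Subgraph)
    (hdisj : ∀ i j, i ≠ j → (T i).edgeSet ∩ (T j).edgeSet = ∅)
    (n : Fin k → V) (hadj : ∀ i, (T i).Adj x (n i)) (hny : ∀ i, n i ≠ y) :
    k + 1 ≤ degOf G x :=
  count_nbrs G k x y hxy n (fun i => (hadj i).adj_sub) hny (inj_of_disj G x T hdisj n hadj)

theorem stmt3 {V : Type*} [Fintype V] (G : SimpleGraph V) (hG : G.Connected)
    (k : ℕ) (hk : genEdgeConn G 3 = k) (x y : V) (hxy : G.Adj x y) :
    k + 1 ≤ degOf G x ∨ k + 1 ≤ degOf G y := by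
  have hxyne : x ≠ y := hxy.ne
  rcases Nat.eq_zero_or_pos k with rfl | hkpos
  · left
    have h1 : 0 < (G.neighborSet x).ncard :=
      (Set.ncard_pos (Set.toFinite _)).mpr ⟨y, hxy⟩
    exact h1
  -- get a vertex z distinct from x and y
  have hne : {m | ∃ S : Set V, S.Finite ∧ S.ncard = 3 ∧ steinerNum G S = m}.Nonempty := by
    by_contra h
    rw [Set.not_nonempty_iff_eq_empty] at h
    rw [genEdgeConn, h, Nat.sInf_empty] at hk
    omega
  obtain ⟨m, S, hSfin, hS3, -⟩ := hne
  obtain ⟨a, b, c, hab, hac, hbc, rfl⟩ := Set.ncard_eq_three.mp hS3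
  have hz : ∃ z : V, z ≠ x ∧ z ≠ y := by
    by_cases ha : a ≠ x ∧ a ≠ y
    · exact ⟨a, ha⟩
    by_cases hb : b ≠ x ∧ b ≠ y
    · exact ⟨b, hb⟩
    push_neg at ha hb
    rcases Classical.em (a = x) with h1 | h1
    · have hby : b = y := hb (fun h => hab (h1.trans h.symm))
      exact ⟨c, fun h => hac (h1.trans h.symm), fun h => hbc (hby.trans h.symm)⟩
    · have hay' : a = y := ha h1
      have hbx : b = x := by
        rcases Classical.em (b = x) with h2 | h2
        · exact h2
        · exact absurd (hay'.trans (hb h2).symm) hab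
      exact ⟨c, fun h => hbc (hbx.trans h.symm), fun h => hac (hay'.trans h.symm)⟩
  obtain ⟨z, hzx, hzy⟩ := hz
  set S₀ : Set V := {x, y, z} with hS₀def
  have hS₀3 : S₀.ncard = 3 :=
    Set.ncard_eq_three.mpr ⟨x, y, z, hxyne, (Ne.symm hzx), (Ne.symm hzy), rfl⟩
  have hmem : steinerNum G S₀ ∈
      {m | ∃ S : Set V, S.Finite ∧ S.ncard = 3 ∧ steinerNum G S = m} :=
    ⟨S₀, Set.toFinite _, hS₀3, rfl⟩
  have hk_le : k ≤ steinerNum G S₀ := hk ▸ Nat.sInf_le hmem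
  have h0 : HasSteinerPacking G S₀ 0 := ⟨fun i => i.elim0, fun i => i.elim0, fun i => i.elim0⟩
  have hbdd : BddAbove {n | HasSteinerPacking G S₀ n} := by
    refine ⟨Fintype.card V, fun m hm => ?_⟩
    obtain ⟨T, htree, hdisj⟩ := hm
    have hxv : ∀ i, x ∈ (T i).verts := fun i => (htree i).1 (by simp [hS₀def])
    have hyv : ∀ i, y ∈ (T i).verts := fun i => (htree i).1 (by simp [hS₀def])
    choose n hn using fun i => exists_nbr G (T i) (htree i).2 (hxv i) (hyv i) hxyne
    have := Fintype.card_le_of_injective n (inj_of_disj G x T hdisj n hn)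
    simpa using this
  have hsup_mem : steinerNum G S₀ ∈ {n | HasSteinerPacking G S₀ n} :=
    Nat.sSup_mem ⟨0, h0⟩ hbdd
  obtain ⟨T0, htree0, hdisj0⟩ := hsup_mem
  set T : Fin k → G.Subgraph := fun i => T0 (Fin.castLE hk_le i) with hTdef
  have htree : ∀ i, IsSteinerTree G S₀ (T i) := fun i => htree0 _
  have hdisj : ∀ i j, i ≠ j → (T i).edgeSet ∩ (T j).edgeSet = ∅ := fun i j hij =>
    hdisj0 _ _ (fun h => hij (Fin.castLE_injective _ h))
  have hxv : ∀ i, x ∈ (T i).verts := fun i => (htree i).1 (by simp [hS₀def])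
  have hyv : ∀ i, y ∈ (T i).verts := fun i => (htree i).1 (by simp [hS₀def])
  have hzv : ∀ i, z ∈ (T i).verts := fun i => (htree i).1 (by simp [hS₀def])
  by_cases hB : ∃ i₀, (T i₀).Adj x y
  · obtain ⟨i₀, hi₀⟩ := hB
    have hnotxy : ∀ i, i ≠ i₀ → ¬ (T i).Adj x y := by
      intro i hi hadj
      have h1 : s(x, y) ∈ (T i).edgeSet := SimpleGraph.Subgraph.mem_edgeSet.mpr hadj
      have h2 : s(x, y) ∈ (T i₀).edgeSet := SimpleGraph.Subgraph.mem_edgeSet.mpr hi₀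
      exact absurd (Set.mem_inter h1 h2)
        (by rw [hdisj i i₀ hi]; exact Set.notMem_empty _)
    by_cases hB1 : ∃ w, (T i₀).Adj x w ∧ w ≠ y
    · left
      obtain ⟨w, hw, hwy⟩ := hB1
      choose n hn using fun i => exists_nbr G (T i) (htree i).2 (hxv i) (hyv i) hxyne
      refine count_from_trees G x y hxy T hdisj
        (fun i => if i = i₀ then w else n i) ?_ ?_
      · intro i
        by_cases h : i = i₀
        · subst h; simpa using hw
        · simpa [h] using hn i
      · intro i
        by_cases h : i = i₀
        · simpa [h] using hwy
        · simp only [if_neg h]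
          intro heq
          exact hnotxy i h (heq ▸ hn i)
    · right
      push_neg at hB1
      have hB2 : ∃ w, (T i₀).Adj y w ∧ w ≠ x := by
        by_contra h
        push_neg at h
        exact tree_third G (T i₀) (htree i₀).2 (hxv i₀) (hzv i₀) hzx hzy hB1 h
      obtain ⟨w, hw, hwx⟩ := hB2
      choose n hn using fun i =>
        exists_nbr G (T i) (htree i).2 (hyv i) (hxv i) (Ne.symm hxyne)
      refine count_from_trees G y x hxy.symm T hdisj
        (fun i => if i = i₀ then w else n i) ?_ ?_
      · intro i
        by_cases h : i = i₀
        · subst h; simpa using hw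
        · simpa [h] using hn i
      · intro i
        by_cases h : i = i₀
        · simpa [h] using hwx
        · simp only [if_neg h]
          intro heq
          exact hnotxy i h ((heq ▸ hn i) : (T i).Adj y x).symm
  · left
    push_neg at hB
    choose n hn using fun i => exists_nbr G (T i) (htree i).2 (hxv i) (hyv i) hxyne
    exact count_from_trees G x y hxy T hdisj n hn (fun i h => hB i (h ▸ hn i))
end
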